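/- Let p, q, w, L be real numbers and let b1, b2, m : ℝ → ℝ be continuous functions. Suppose M : ℝ → ℝ is differentiable with M'(t) = m(t) for all t, G : ℝ → ℝ is differentiable with G'(t) = b1(t)·(q + M(t)) and G(t) ≠ 0 for all t, and K : ℝ → ℝ is differentiable with K'(t) = b2(t)·(q + M(t))/G(t)² for all t. Define u(x,t) = q + M(t) + L·tanh( w + L·x/(2·G(t)) − (L/2)·K(t) ). Then u solves the variable-coefficient forced Burgers equation ∂u/∂t + a(x,t)·u·∂u/∂x + b(x,t)·∂²u/∂x² − m(t) = 0 for all (x,t) ∈ ℝ², where a(x,t) = (x·b1(t) + b2(t))/G(t) and b(x,t) = x·b1(t) + b2(t). -/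

import Mathlib

lemma my_hasDerivAt_tanh (x : ℝ) :
    HasDerivAt Real.tanh (1 - Real.tanh x ^ 2) x := by
  have hc : Real.cosh x ≠ 0 := ne_of_gt (Real.cosh_pos x)
  have h := (Real.hasDerivAt_sinh x).div (Real.hasDerivAt_cosh x) hc
  have hfun : Real.tanh = fun y => Real.sinh y / Real.cosh y := by
    funext y; exact Real.tanh_eq_sinh_div_cosh y
  rw [hfun]
  refine h.congr_deriv (Eq.symm ?_)
  have := Real.cosh_sq_sub_sinh_sq x
  have hc2 : Real.cosh x ^ 2 ≠ 0 := pow_ne_zero 2 hc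
  show 1 - (Real.sinh x / Real.cosh x) ^ 2 = _
  rw [div_pow, eq_div_iff hc2, sub_mul, div_mul_cancel₀ _ hc2]
  ring

/-- The general first-order soliton-like solution (Eq. (22) of the paper)
solves the variable-coefficient forced Burgers equation
`u_t + a(x,t)·u·u_x + b(x,t)·u_xx − m(t) = 0`
with `a(x,t) = (x·b1(t) + b2(t))/G(t)` and `b(x,t) = x·b1(t) + b2(t)`. -/
theorem vcFBE_general_solution
    (p q w L : ℝ) (b1 b2 m M G K : ℝ → ℝ)
    (hb1 : Continuous b1) (hb2 : Continuous b2) (hm : Continuous m)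
    (hM : ∀ t, HasDerivAt M (m t) t)
    (hG : ∀ t, HasDerivAt G (b1 t * (q + M t)) t)
    (hGne : ∀ t, G t ≠ 0)
    (hK : ∀ t, HasDerivAt K (b2 t * (q + M t) / (G t) ^ 2) t)
    (u : ℝ → ℝ → ℝ)
    (hu : ∀ x t, u x t =
      q + M t + L * Real.tanh (w + L * x / (2 * G t) - L / 2 * K t)) :
    ∀ x t : ℝ,
      deriv (fun t' => u x t') t
        + ((x * b1 t + b2 t) / G t) * u x t * deriv (fun x' => u x' t) x
        + (x * b1 t + b2 t) * deriv (deriv (fun x' => u x' t)) x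
        - m t = 0 := by
  intro x t
  set g := G t with hg
  have hgne : g ≠ 0 := hGne t
  -- inner function in x (at fixed t)
  set θ : ℝ → ℝ := fun x' => w + L * x' / (2 * g) - L / 2 * K t with hθdef
  have hθ : ∀ x', HasDerivAt θ (L / (2 * g)) x' := by
    intro x'
    have h1 : HasDerivAt (fun y : ℝ => L * y / (2 * g)) (L / (2 * g)) x' := by
      have := ((hasDerivAt_id x').const_mul L).div_const (2 * g)
      simpa [mul_one] using this
    exact (h1.const_add w).sub_const (L / 2 * K t)
  -- first x-derivative
  set T : ℝ → ℝ := fun x' => Real.tanh (θ x') with hTdef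
  have hT : ∀ x', HasDerivAt T ((1 - T x' ^ 2) * (L / (2 * g))) x' := fun x' =>
    (my_hasDerivAt_tanh (θ x')).comp x' (hθ x')
  have hux : ∀ x', HasDerivAt (fun x'' => u x'' t)
      (L * ((1 - T x' ^ 2) * (L / (2 * g)))) x' := by
    intro x'
    have h := ((hT x').const_mul L).const_add (q + M t)
    refine h.congr_of_eventuallyEq ?_
    filter_upwards with y
    rw [hu y t]
  have hderiv1 : deriv (fun x' => u x' t) =
      fun x' => L * ((1 - T x' ^ 2) * (L / (2 * g))) := by
    funext x'; exact (hux x').deriv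
  -- second x-derivative
  have huxx : HasDerivAt (deriv (fun x' => u x' t))
      (L * ((-(2 * T x * ((1 - T x ^ 2) * (L / (2 * g))))) * (L / (2 * g)))) x := by
    rw [hderiv1]
    have hsq : HasDerivAt (fun x' => 1 - T x' ^ 2)
        (-(2 * T x * ((1 - T x ^ 2) * (L / (2 * g))))) x := by
      have := ((hT x).pow 2).const_sub 1
      simpa [pow_one, mul_comm, mul_assoc, mul_left_comm] using this
    have := (hsq.mul_const (L / (2 * g))).const_mul L
    simpa using this
  -- t-derivative
  have hinv : HasDerivAt (fun t' => (2 * G t')⁻¹)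
      (-(2 * (b1 t * (q + M t))) / (2 * g) ^ 2) t :=
    ((hG t).const_mul 2).inv (by simpa using mul_ne_zero two_ne_zero hgne)
  have hfrac : HasDerivAt (fun t' => L * x / (2 * G t'))
      (L * x * (-(2 * (b1 t * (q + M t))) / (2 * g) ^ 2)) t := by
    have := hinv.const_mul (L * x)
    refine this.congr_of_eventuallyEq ?_
    filter_upwards with y
    rw [div_eq_mul_inv]
  have hψ : HasDerivAt (fun t' => w + L * x / (2 * G t') - L / 2 * K t')
      (L * x * (-(2 * (b1 t * (q + M t))) / (2 * g) ^ 2)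
        - L / 2 * (b2 t * (q + M t) / g ^ 2)) t := by
    exact ((hfrac.const_add w).sub (((hK t).const_mul (L / 2))))
  have hψval : (w + L * x / (2 * G t) - L / 2 * K t) = θ x := by rfl
  have hut : HasDerivAt (fun t' => u x t')
      (m t + L * ((1 - T x ^ 2) *
        (L * x * (-(2 * (b1 t * (q + M t))) / (2 * g) ^ 2)
          - L / 2 * (b2 t * (q + M t) / g ^ 2)))) t := by
    have htanh : HasDerivAt (fun t' => Real.tanh (w + L * x / (2 * G t') - L / 2 * K t'))
        ((1 - T x ^ 2) *
          (L * x * (-(2 * (b1 t * (q + M t))) / (2 * g) ^ 2)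
            - L / 2 * (b2 t * (q + M t) / g ^ 2))) t := by
      have := (my_hasDerivAt_tanh (w + L * x / (2 * G t) - L / 2 * K t)).comp t hψ
      exact this
    have h := ((hM t).const_add q).add (htanh.const_mul L)
    refine h.congr_of_eventuallyEq ?_ |>.congr_deriv ?_
    · filter_upwards with y; rw [hu x y]; rfl
    · ring
  -- assemble
  rw [hut.deriv, huxx.deriv, hderiv1, hu x t, hψval]
  set Tv := T x
  field_simp
  ring
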